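/- Define the simplicial complex Δ[n] on vertex set {1,...,n} whose faces are the subsets in which any two distinct elements differ by at least 2. Then Δ[3k+2] is homotopy equivalent to the sphere S^k for every natural number k. -/

import Mathlib

/-- `s` is a face of the simplicial complex `Δ[n]`: a subset of `{1,…,n}` in which
any two distinct elements differ by at least 2. -/
def IsDeltaFace (n : ℕ) (s : Set ℕ) : Prop :=
  s ⊆ Set.Icc 1 n ∧ ∀ i ∈ s, ∀ j ∈ s, i ≠ j → i + 2 ≤ j ∨ j + 2 ≤ i

/-- The geometric realization of `Δ[n]`: convex combinations of vertices supported
on a face. -/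
abbrev DeltaRealization (n : ℕ) : Type :=
  {x : ℕ → ℝ // (∀ i, 0 ≤ x i) ∧ IsDeltaFace n (Function.support x) ∧
    ∑ i ∈ Finset.Icc 1 n, x i = 1}

namespace S5

lemma adj {n : ℕ} (x : DeltaRealization n) {i : ℕ} (h1 : x.1 i ≠ 0)
    (h2 : x.1 (i+1) ≠ 0) : False := by
  obtain ⟨-, ⟨-, hface⟩, -⟩ := x.2
  have := hface i (Function.mem_support.mpr h1) (i+1) (Function.mem_support.mpr h2) (by omega)
  omega

lemma mem_Icc_of {n : ℕ} (x : DeltaRealization n) {i : ℕ} (h : x.1 i ≠ 0) :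
    1 ≤ i ∧ i ≤ n :=
  Set.mem_Icc.mp (x.2.2.1.1 (Function.mem_support.mpr h))

lemma x_zero {n : ℕ} (x : DeltaRealization n) : x.1 0 = 0 := by
  by_contra h; exact absurd (mem_Icc_of x h).1 (by omega)

lemma x_big {n : ℕ} (x : DeltaRealization n) {i : ℕ} (h : n < i) : x.1 i = 0 := by
  by_contra hh; exact absurd (mem_Icc_of x hh).2 (by omega)

lemma cases3 {k : ℕ} (x : DeltaRealization (3*k+2)) (m : ℕ) :
    x.1 (3*m+2) = 0 ∧ x.1 (3*m) = 0 ∨ x.1 (3*m+1) = 0 := by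
  by_cases h : x.1 (3*m+1) = 0
  · right; exact h
  · left
    refine ⟨by by_contra hb; exact adj x h hb, by by_contra hc; exact adj x hc h⟩

lemma tripleSum (f : ℕ → ℝ) (hf : f 0 = 0) (k : ℕ) :
    ∑ i ∈ Finset.Icc 1 (3*k+2), f i
      = ∑ j ∈ Finset.range (k+1), (f (3*j) + f (3*j+1) + f (3*j+2)) := by
  induction k with
  | zero =>
      have : Finset.Icc 1 2 = ({1, 2} : Finset ℕ) := by decide
      simp [this, hf]
  | succ n ih =>
      have h1 : 3*(n+1)+2 = (3*n+4) + 1 := by ring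
      have h2 : 3*n+4 = (3*n+3) + 1 := by ring
      have h3 : 3*n+3 = (3*n+2) + 1 := by ring
      rw [h1, Finset.sum_Icc_succ_top (by omega), h2,
        Finset.sum_Icc_succ_top (by omega), h3,
        Finset.sum_Icc_succ_top (by omega), ih]
      conv_rhs => rw [Finset.sum_range_succ]
      simp only [show 3*n+2+1 = 3*n+3 by omega, show 3*n+3+1 = 3*n+4 by omega,
        show 3*n+3+2 = 3*n+5 by omega, show 3*n+4+1 = 3*n+5 by omega]
      abel

lemma sum_triples {k : ℕ} (x : DeltaRealization (3*k+2)) :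
    ∑ j ∈ Finset.range (k+1), (x.1 (3*j) + x.1 (3*j+1) + x.1 (3*j+2)) = 1 := by
  rw [← tripleSum _ (x_zero x)]; exact x.2.2.2

noncomputable def Yf (k : ℕ) (x : ℕ → ℝ) : EuclideanSpace ℝ (Fin (k+1)) :=
  WithLp.toLp 2 (fun j : Fin (k+1) => x (3*j.1+1) - x (3*j.1+2) - x (3*j.1))

lemma Yf_apply {k : ℕ} (x : ℕ → ℝ) (j : Fin (k+1)) :
    Yf k x j = x (3*j.1+1) - x (3*j.1+2) - x (3*j.1) := rfl

lemma Yf_ne {k : ℕ} (x : DeltaRealization (3*k+2)) : Yf k x.1 ≠ 0 := by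
  intro h0
  have hco : ∀ j : Fin (k+1), x.1 (3*j.1+1) - x.1 (3*j.1+2) - x.1 (3*j.1) = 0 := by
    intro j
    have := congrArg (fun v : EuclideanSpace ℝ (Fin (k+1)) => v j) h0
    simpa [Yf] using this
  have hz : ∀ j : ℕ, j < k+1 → x.1 (3*j) = 0 ∧ x.1 (3*j+1) = 0 ∧ x.1 (3*j+2) = 0 := by
    intro j hj
    have h := hco ⟨j, hj⟩
    rcases cases3 x j with ⟨hb, hc⟩ | ha
    · refine ⟨hc, ?_, hb⟩; simp only at h; linarith
    · have hb : x.1 (3*j+2) = 0 ∧ x.1 (3*j) = 0 := by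
        constructor <;> nlinarith [x.2.1 (3*j+2), x.2.1 (3*j), h]
      exact ⟨hb.2, ha, hb.1⟩
  have := sum_triples x
  rw [Finset.sum_eq_zero] at this
  · exact one_ne_zero this.symm
  · intro j hj
    obtain ⟨h1, h2, h3⟩ := hz j (Finset.mem_range.mp hj)
    rw [h1, h2, h3]; ring


def fidx (k j : ℕ) : Fin (k+1) := ⟨j % (k+1), Nat.mod_lt _ (Nat.succ_pos k)⟩

lemma fidx_eq {k j : ℕ} (h : j < k+1) : fidx k j = ⟨j, h⟩ := by
  simp [fidx, Nat.mod_eq_of_lt h]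

lemma fidx_val {k : ℕ} (j : Fin (k+1)) : fidx k j.1 = j := by
  rw [fidx_eq j.2]

noncomputable def Nf (k : ℕ) (u : EuclideanSpace ℝ (Fin (k+1))) : ℝ :=
  ∑ j ∈ Finset.range (k+1), |u (fidx k j)|

lemma Nf_pos {k : ℕ} {u : EuclideanSpace ℝ (Fin (k+1))} (hu : u ≠ 0) : 0 < Nf k u := by
  have : ∃ j : Fin (k+1), u j ≠ 0 := by
    by_contra h
    push_neg at h
    exact hu (by ext i; exact h i)
  obtain ⟨j, hj⟩ := this
  refine Finset.sum_pos' (fun i _ => abs_nonneg _) ⟨j.1, Finset.mem_range.mpr j.2, ?_⟩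
  rw [fidx_val]
  exact abs_pos.mpr hj

lemma max_add_max_neg (a : ℝ) : max a 0 + max (-a) 0 = |a| := by
  rcases le_total a 0 with h | h
  · rw [max_eq_right h, max_eq_left (by linarith), abs_of_nonpos h]; ring
  · rw [max_eq_left h, max_eq_right (by linarith), abs_of_nonneg h]; ring

lemma max_sub_max_neg (a : ℝ) : max a 0 - max (-a) 0 = a := by
  rcases le_total a 0 with h | h
  · rw [max_eq_right h, max_eq_left (by linarith)]; ring
  · rw [max_eq_left h, max_eq_right (by linarith)]; ring

noncomputable def gf (k : ℕ) (u : EuclideanSpace ℝ (Fin (k+1))) : ℕ → ℝ := fun i =>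
  if i % 3 ≠ 0 ∧ i ≤ 3*k+2 then
    (if i % 3 = 1 then max (u (fidx k (i/3))) 0 else max (-(u (fidx k (i/3)))) 0) / Nf k u
  else 0

lemma gf_nonneg {k : ℕ} {u : EuclideanSpace ℝ (Fin (k+1))} (hu : u ≠ 0) (i : ℕ) :
    0 ≤ gf k u i := by
  unfold gf
  split_ifs with h1 h2
  · exact div_nonneg (le_max_right _ _) (Nf_pos hu).le
  · exact div_nonneg (le_max_right _ _) (Nf_pos hu).le
  · exact le_refl 0

lemma gf_pos_of_ne {k : ℕ} {u : EuclideanSpace ℝ (Fin (k+1))} {i : ℕ}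
    (h : gf k u i ≠ 0) :
    i % 3 ≠ 0 ∧ i ≤ 3*k+2 ∧
      ((i % 3 = 1 ∧ 0 < u (fidx k (i/3))) ∨ (i % 3 = 2 ∧ u (fidx k (i/3)) < 0)) := by
  unfold gf at h
  split_ifs at h with h1 h2
  · have hm : max (u (fidx k (i/3))) 0 ≠ 0 := by
      intro hz; rw [hz] at h; simp at h
    have : 0 < u (fidx k (i/3)) := by
      rcases lt_or_ge 0 (u (fidx k (i/3))) with hp | hp
      · exact hp
      · exact absurd (max_eq_right hp) hm
    exact ⟨h1.1, h1.2, Or.inl ⟨h2, this⟩⟩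
  · have hm : max (-(u (fidx k (i/3)))) 0 ≠ 0 := by
      intro hz; rw [hz] at h; simp at h
    have : u (fidx k (i/3)) < 0 := by
      rcases lt_or_ge (u (fidx k (i/3))) 0 with hp | hp
      · exact hp
      · exact absurd (max_eq_right (by linarith)) hm
    have h3 : i % 3 = 2 := by omega
    exact ⟨h1.1, h1.2, Or.inr ⟨h3, this⟩⟩
  · exact absurd rfl h

lemma gf_mem {k : ℕ} {u : EuclideanSpace ℝ (Fin (k+1))} (hu : ‖u‖ = 1) :
    (∀ i, 0 ≤ gf k u i) ∧ IsDeltaFace (3*k+2) (Function.support (gf k u)) ∧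
      ∑ i ∈ Finset.Icc 1 (3*k+2), gf k u i = 1 := by
  have hu0 : u ≠ 0 := by intro h; rw [h] at hu; simp at hu
  refine ⟨gf_nonneg hu0, ⟨?_, ?_⟩, ?_⟩
  · intro i hi
    obtain ⟨h1, h2, -⟩ := gf_pos_of_ne (Function.mem_support.mp hi)
    exact Set.mem_Icc.mpr ⟨by omega, h2⟩
  · intro i hi j hj hij
    by_contra hcon
    push_neg at hcon
    -- wlog j = i + 1
    obtain ⟨hi1, -, hiu⟩ := gf_pos_of_ne (Function.mem_support.mp hi)
    obtain ⟨hj1, -, hju⟩ := gf_pos_of_ne (Function.mem_support.mp hj)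
    rcases Nat.lt_or_ge i j with hlt | hge
    · have hj_eq : j = i + 1 := by omega
      subst hj_eq
      have h1 : i % 3 = 1 := by omega
      have hdv : (i+1)/3 = i/3 := by omega
      rcases hiu with ⟨-, hp⟩ | ⟨h2, -⟩
      · rcases hju with ⟨h2, -⟩ | ⟨-, hn⟩
        · omega
        · rw [hdv] at hn; linarith
      · omega
    · have hi_eq : i = j + 1 := by omega
      subst hi_eq
      have h1 : j % 3 = 1 := by omega
      have hdv : (j+1)/3 = j/3 := by omega
      rcases hju with ⟨-, hp⟩ | ⟨h2, -⟩
      · rcases hiu with ⟨h2, -⟩ | ⟨-, hn⟩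
        · omega
        · rw [hdv] at hn; linarith
      · omega
  · rw [tripleSum _ (by unfold gf; norm_num) k]
    have hterm : ∀ j ∈ Finset.range (k+1),
        gf k u (3*j) + gf k u (3*j+1) + gf k u (3*j+2)
          = |u (fidx k j)| / Nf k u := by
      intro j hj
      have hjk : j < k+1 := Finset.mem_range.mp hj
      have e0 : gf k u (3*j) = 0 := by unfold gf; simp
      have ed1 : (3*j+1)/3 = j := by omega
      have ed2 : (3*j+2)/3 = j := by omega
      have e1 : gf k u (3*j+1) = max (u (fidx k j)) 0 / Nf k u := by
        unfold gf
        rw [if_pos ⟨by omega, by omega⟩, if_pos (by omega), ed1]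
      have e2 : gf k u (3*j+2) = max (-(u (fidx k j))) 0 / Nf k u := by
        unfold gf
        rw [if_pos ⟨by omega, by omega⟩, if_neg (by omega), ed2]
      rw [e0, e1, e2, zero_add, ← add_div, max_add_max_neg]
    rw [Finset.sum_congr rfl hterm, ← Finset.sum_div]
    rw [show ∑ j ∈ Finset.range (k+1), |u (fidx k j)| = Nf k u from rfl]
    exact div_self (Nf_pos hu0).ne'


lemma absY {k : ℕ} (x : DeltaRealization (3*k+2)) :
    ∑ j ∈ Finset.range (k+1), |Yf k x.1 (fidx k j)| = 1 := by
  have hterm : ∀ j ∈ Finset.range (k+1),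
      |Yf k x.1 (fidx k j)| = x.1 (3*j) + x.1 (3*j+1) + x.1 (3*j+2) := by
    intro j hj
    have hjk : j < k+1 := Finset.mem_range.mp hj
    rw [fidx_eq hjk, Yf_apply]
    simp only
    rcases cases3 x j with ⟨hb, hc⟩ | ha
    · rw [hb, hc, abs_of_nonneg (by simpa using x.2.1 (3*j+1))]; ring
    · rw [ha, abs_of_nonpos (by nlinarith [x.2.1 (3*j+2), x.2.1 (3*j)])]; ring
  rw [Finset.sum_congr rfl hterm]
  exact sum_triples x

lemma evalCont {k : ℕ} (j : Fin (k+1)) :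
    Continuous fun u : EuclideanSpace ℝ (Fin (k+1)) => u j :=
  (continuous_apply j).comp (PiLp.continuous_ofLp 2 fun _ : Fin (k+1) => ℝ)

lemma contY {k : ℕ} : Continuous fun x : DeltaRealization (3*k+2) => Yf k x.1 := by
  have h : Continuous fun x : DeltaRealization (3*k+2) =>
      (fun j : Fin (k+1) => x.1 (3*j.1+1) - x.1 (3*j.1+2) - x.1 (3*j.1)) :=
    continuous_pi fun j =>
      (((continuous_apply (3*j.1+1)).comp continuous_subtype_val).sub
        ((continuous_apply (3*j.1+2)).comp continuous_subtype_val)).sub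
        ((continuous_apply (3*j.1)).comp continuous_subtype_val)
  exact (PiLp.continuous_toLp 2 fun _ : Fin (k+1) => ℝ).comp h

lemma norm_Yf_ne {k : ℕ} (x : DeltaRealization (3*k+2)) : ‖Yf k x.1‖ ≠ 0 :=
  norm_ne_zero_iff.mpr (Yf_ne x)

noncomputable def Fmap (k : ℕ) :
    C(DeltaRealization (3*k+2), Metric.sphere (0 : EuclideanSpace ℝ (Fin (k+1))) 1) where
  toFun x := ⟨‖Yf k x.1‖⁻¹ • Yf k x.1, by
    rw [mem_sphere_zero_iff_norm, norm_smul, norm_inv, norm_norm,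
      inv_mul_cancel₀ (norm_Yf_ne x)]⟩
  continuous_toFun := by
    apply Continuous.subtype_mk
    exact (contY.norm.inv₀ norm_Yf_ne).smul contY

lemma sphere_ne_zero {k : ℕ}
    (u : Metric.sphere (0 : EuclideanSpace ℝ (Fin (k+1))) 1) : u.1 ≠ 0 := by
  intro h
  have := mem_sphere_zero_iff_norm.mp u.2
  rw [h] at this; simp at this

noncomputable def Gmap (k : ℕ) :
    C(Metric.sphere (0 : EuclideanSpace ℝ (Fin (k+1))) 1, DeltaRealization (3*k+2)) where
  toFun u := ⟨gf k u.1, gf_mem (mem_sphere_zero_iff_norm.mp u.2)⟩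
  continuous_toFun := by
    apply Continuous.subtype_mk
    apply continuous_pi
    intro i
    unfold gf
    by_cases h : i % 3 ≠ 0 ∧ i ≤ 3*k+2
    · simp only [if_pos h]
      apply Continuous.div
      · by_cases h1 : i % 3 = 1
        · simp only [if_pos h1]
          exact ((evalCont _).comp continuous_subtype_val).max continuous_const
        · simp only [if_neg h1]
          exact ((evalCont _).comp continuous_subtype_val).neg.max continuous_const
      · exact continuous_finset_sum _ fun j _ =>
          ((evalCont _).comp continuous_subtype_val).abs
      · intro u
        exact (Nf_pos (sphere_ne_zero u)).ne'
    · simp only [if_neg h]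
      exact continuous_const

lemma Yf_gf {k : ℕ} (u : EuclideanSpace ℝ (Fin (k+1))) (_hu0 : u ≠ 0) :
    Yf k (gf k u) = (Nf k u)⁻¹ • u := by
  ext j
  show gf k u (3*j.1+1) - gf k u (3*j.1+2) - gf k u (3*j.1) = (Nf k u)⁻¹ • u j
  have hj := j.2
  have e1 : gf k u (3*j.1+1) = max (u j) 0 / Nf k u := by
    unfold gf
    rw [if_pos ⟨by omega, by omega⟩, if_pos (by omega),
      show (3*j.1+1)/3 = j.1 by omega, fidx_val]
  have e2 : gf k u (3*j.1+2) = max (-(u j)) 0 / Nf k u := by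
    unfold gf
    rw [if_pos ⟨by omega, by omega⟩, if_neg (by omega),
      show (3*j.1+2)/3 = j.1 by omega, fidx_val]
  have e0 : gf k u (3*j.1) = 0 := by unfold gf; simp
  rw [e0, e1, e2, sub_zero, div_sub_div_same, max_sub_max_neg, div_eq_inv_mul]
  rfl

lemma FG_id (k : ℕ) : (Fmap k).comp (Gmap k) = ContinuousMap.id _ := by
  apply ContinuousMap.ext
  intro u
  apply Subtype.ext
  show ‖Yf k (gf k u.1)‖⁻¹ • Yf k (gf k u.1) = u.1
  have hN := Nf_pos (sphere_ne_zero u)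
  rw [Yf_gf u.1 (sphere_ne_zero u), norm_smul, Real.norm_eq_abs, abs_of_nonneg (inv_nonneg.mpr hN.le),
    mem_sphere_zero_iff_norm.mp u.2, mul_one, inv_inv, smul_smul,
    mul_inv_cancel₀ hN.ne', one_smul]


noncomputable def sig (k j : ℕ) (t : ℝ) : ℝ :=
  min 1 (max 0 ((k:ℝ)*t - ((k - j : ℕ) : ℝ)))

lemma sig_nonneg {k j : ℕ} {t : ℝ} : 0 ≤ sig k j t :=
  le_min zero_le_one (le_max_left _ _)

lemma sig_le_one {k j : ℕ} {t : ℝ} : sig k j t ≤ 1 := min_le_left _ _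

lemma sig_zero {k j : ℕ} : sig k j 0 = 0 := by
  unfold sig
  rw [mul_zero, zero_sub, max_eq_left (neg_nonpos.mpr (Nat.cast_nonneg _))]
  simp

lemma sig_one_eq {k j : ℕ} (h1 : 1 ≤ j) (h2 : j ≤ k) : sig k j 1 = 1 := by
  unfold sig
  have he : (k:ℝ)*1 - ((k-j:ℕ):ℝ) = (j:ℝ) := by
    rw [Nat.cast_sub h2]; ring
  rw [he, max_eq_right (Nat.cast_nonneg _), min_eq_left (by exact_mod_cast h1)]

lemma sig_pos_succ {k j : ℕ} {t : ℝ} (h : 0 < sig k j t) (hjk : j + 1 ≤ k) :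
    sig k (j+1) t = 1 := by
  unfold sig at h ⊢
  have h0 : 0 < (k:ℝ)*t - ((k-j:ℕ):ℝ) := by
    by_contra hc
    push_neg at hc
    rw [max_eq_left hc] at h
    simp at h
  have hc : ((k-j:ℕ):ℝ) = ((k-(j+1):ℕ):ℝ) + 1 := by
    have : k - j = (k - (j+1)) + 1 := by omega
    rw [this]; push_cast; ring
  have h1 : 1 ≤ (k:ℝ)*t - ((k-(j+1):ℕ):ℝ) := by linarith
  rw [max_eq_right (by linarith), min_eq_left h1]

noncomputable def hf (k : ℕ) (t : ℝ) (x : ℕ → ℝ) : ℕ → ℝ := fun i =>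
  if i % 3 = 0 then (1 - sig k (i/3) t) * x i
  else if i % 3 = 2 then x i + sig k (i/3) t * x (i-2)
  else x i

lemma add_ne_zero_cases {a b : ℝ} (h : a + b ≠ 0) : a ≠ 0 ∨ b ≠ 0 := by
  by_contra hc
  push_neg at hc
  exact h (by rw [hc.1, hc.2, add_zero])

lemma hf_ne {k : ℕ} (x : DeltaRealization (3*k+2)) {t : ℝ} {i : ℕ}
    (h : hf k t x.1 i ≠ 0) :
    (i % 3 = 0 ∧ x.1 i ≠ 0 ∧ sig k (i/3) t ≠ 1) ∨
    (i % 3 = 1 ∧ x.1 i ≠ 0) ∨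
    (i % 3 = 2 ∧ (x.1 i ≠ 0 ∨ (0 < sig k (i/3) t ∧ x.1 (i-2) ≠ 0))) := by
  unfold hf at h
  split_ifs at h with h0 h2
  · left
    refine ⟨h0, right_ne_zero_of_mul h, ?_⟩
    intro hs
    rw [hs] at h
    simp at h
  · right; right
    refine ⟨h2, ?_⟩
    rcases add_ne_zero_cases h with ha | hb
    · exact Or.inl ha
    · right
      refine ⟨lt_of_le_of_ne sig_nonneg (Ne.symm (left_ne_zero_of_mul hb)), right_ne_zero_of_mul hb⟩
  · right; left; exact ⟨by omega, h⟩

lemma hf_mem {k : ℕ} (x : DeltaRealization (3*k+2)) (t : ℝ) :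
    (∀ i, 0 ≤ hf k t x.1 i) ∧ IsDeltaFace (3*k+2) (Function.support (hf k t x.1)) ∧
      ∑ i ∈ Finset.Icc 1 (3*k+2), hf k t x.1 i = 1 := by
  refine ⟨?_, ⟨?_, ?_⟩, ?_⟩
  · intro i
    unfold hf
    split_ifs
    · exact mul_nonneg (by linarith [sig_le_one (k := k) (j := i/3) (t := t)]) (x.2.1 i)
    · exact add_nonneg (x.2.1 i) (mul_nonneg sig_nonneg (x.2.1 _))
    · exact x.2.1 i
  · intro i hi
    rcases hf_ne x (Function.mem_support.mp hi) with ⟨h0, hx, -⟩ | ⟨h1, hx⟩ | ⟨h2, hx⟩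
    · have := mem_Icc_of x hx; exact Set.mem_Icc.mpr this
    · have := mem_Icc_of x hx; exact Set.mem_Icc.mpr this
    · rcases hx with hx | ⟨-, hx⟩
      · have := mem_Icc_of x hx; exact Set.mem_Icc.mpr this
      · have h3 := mem_Icc_of x hx
        refine Set.mem_Icc.mpr ⟨by omega, by omega⟩
  · -- pairwise distance ≥ 2
    have key : ∀ i, hf k t x.1 i ≠ 0 → hf k t x.1 (i+1) ≠ 0 → False := by
      intro i hi hj
      rcases hf_ne x hi with ⟨h0, hx, -⟩ | ⟨h1, hx⟩ | ⟨h2, hx⟩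
      · -- i ≡ 0 : next is ≡ 1
        rcases hf_ne x hj with ⟨hh, -⟩ | ⟨-, hy⟩ | ⟨hh, -⟩
        · omega
        · exact adj x hx hy
        · omega
      · -- i ≡ 1 : next is ≡ 2
        rcases hf_ne x hj with ⟨hh, -⟩ | ⟨hh, -⟩ | ⟨-, hy⟩
        · omega
        · omega
        · rcases hy with hy | ⟨-, hy⟩
          · exact adj x hx hy
          · have he : (i+1) - 2 + 1 = i := by omega
            refine adj x (i := (i+1)-2) hy ?_
            rw [he]; exact hx
      · -- i ≡ 2 : next is ≡ 0
        rcases hf_ne x hj with ⟨-, hy, hs⟩ | ⟨hh, -⟩ | ⟨hh, -⟩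
        · rcases hx with hx | ⟨hsp, hx⟩
          · exact adj x hx hy
          · have hle := (mem_Icc_of x hy).2
            have hdv : (i+1)/3 = i/3 + 1 := by omega
            have hjk : i/3 + 1 ≤ k := by omega
            rw [hdv] at hs
            exact hs (sig_pos_succ hsp hjk)
        · omega
        · omega
    intro i hi j hj hij
    by_contra hcon
    push_neg at hcon
    rcases Nat.lt_or_ge i j with hlt | hge
    · have : j = i + 1 := by omega
      subst this
      exact key i (Function.mem_support.mp hi) (Function.mem_support.mp hj)
    · have : i = j + 1 := by omega
      subst this
      exact key j (Function.mem_support.mp hj) (Function.mem_support.mp hi)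
  · rw [tripleSum _ (by unfold hf; simp [x_zero x]) k]
    have hterm : ∀ j ∈ Finset.range (k+1),
        hf k t x.1 (3*j) + hf k t x.1 (3*j+1) + hf k t x.1 (3*j+2)
          = x.1 (3*j) + x.1 (3*j+1) + x.1 (3*j+2) := by
      intro j hj
      have e0 : hf k t x.1 (3*j) = (1 - sig k j t) * x.1 (3*j) := by
        unfold hf
        rw [if_pos (by omega), show (3*j)/3 = j by omega]
      have e1 : hf k t x.1 (3*j+1) = x.1 (3*j+1) := by
        unfold hf
        rw [if_neg (by omega), if_neg (by omega)]
      have e2 : hf k t x.1 (3*j+2) = x.1 (3*j+2) + sig k j t * x.1 (3*j) := by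
        unfold hf
        rw [if_neg (by omega), if_pos (by omega), show (3*j+2)/3 = j by omega,
          show 3*j+2-2 = 3*j by omega]
      rw [e0, e1, e2]; ring
    rw [Finset.sum_congr rfl hterm]
    exact sum_triples x

lemma hf_zero {k : ℕ} (x : DeltaRealization (3*k+2)) : hf k 0 x.1 = x.1 := by
  funext i
  unfold hf
  split_ifs <;> simp [sig_zero]


lemma mul_max_zero {c z : ℝ} (hc : 0 ≤ c) : max (c*z) 0 = c * max z 0 := by
  rcases le_total z 0 with h | h
  · rw [max_eq_right (by nlinarith), max_eq_right h, mul_zero]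
  · rw [max_eq_left (mul_nonneg hc h), max_eq_left h]

lemma Nf_F {k : ℕ} (x : DeltaRealization (3*k+2)) :
    Nf k (‖Yf k x.1‖⁻¹ • Yf k x.1) = ‖Yf k x.1‖⁻¹ := by
  have hc : (0:ℝ) < ‖Yf k x.1‖ := norm_pos_iff.mpr (Yf_ne x)
  unfold Nf
  have hterm : ∀ j ∈ Finset.range (k+1),
      |(‖Yf k x.1‖⁻¹ • Yf k x.1) (fidx k j)| = ‖Yf k x.1‖⁻¹ * |Yf k x.1 (fidx k j)| := by
    intro j _
    have happ : (‖Yf k x.1‖⁻¹ • Yf k x.1) (fidx k j)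
        = ‖Yf k x.1‖⁻¹ * Yf k x.1 (fidx k j) := rfl
    rw [happ, abs_mul, abs_of_nonneg (inv_nonneg.mpr hc.le)]
  rw [Finset.sum_congr rfl hterm, ← Finset.mul_sum, absY, mul_one]

lemma gf_F {k : ℕ} (x : DeltaRealization (3*k+2)) (i : ℕ) :
    gf k ((Fmap k) x).1 i =
      if i % 3 ≠ 0 ∧ i ≤ 3*k+2 then
        (if i % 3 = 1 then max (Yf k x.1 (fidx k (i/3))) 0
         else max (-(Yf k x.1 (fidx k (i/3)))) 0)
      else 0 := by
  have hc : (0:ℝ) < ‖Yf k x.1‖ := norm_pos_iff.mpr (Yf_ne x)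
  have hinv : (0:ℝ) < ‖Yf k x.1‖⁻¹ := inv_pos.mpr hc
  show gf k (‖Yf k x.1‖⁻¹ • Yf k x.1) i = _
  unfold gf
  rw [Nf_F x]
  split_ifs with h1 h2
  · have happ : (‖Yf k x.1‖⁻¹ • Yf k x.1) (fidx k (i/3))
        = ‖Yf k x.1‖⁻¹ * Yf k x.1 (fidx k (i/3)) := rfl
    rw [happ, mul_max_zero hinv.le, mul_comm, mul_div_assoc,
      div_self (inv_ne_zero hc.ne'), mul_one]
  · have happ : (‖Yf k x.1‖⁻¹ • Yf k x.1) (fidx k (i/3))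
        = ‖Yf k x.1‖⁻¹ * Yf k x.1 (fidx k (i/3)) := rfl
    rw [happ, ← mul_neg, mul_max_zero hinv.le, mul_comm, mul_div_assoc,
      div_self (inv_ne_zero hc.ne'), mul_one]
  · rfl

lemma hf_one {k : ℕ} (x : DeltaRealization (3*k+2)) :
    hf k 1 x.1 = gf k ((Fmap k) x).1 := by
  funext i
  rw [gf_F]
  unfold hf
  by_cases h0 : i % 3 = 0
  · rw [if_pos h0, if_neg (by omega)]
    by_cases hx : x.1 i = 0
    · rw [hx, mul_zero]
    · have hIcc := mem_Icc_of x hx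
      rw [sig_one_eq (by omega) (by omega)]
      ring
  · by_cases hle : i ≤ 3*k+2
    · have hjk : i/3 < k+1 := by omega
      by_cases h1 : i % 3 = 1
      · rw [if_neg h0, if_neg (by omega), if_pos ⟨h0, hle⟩, if_pos h1,
          fidx_eq hjk, Yf_apply]
        simp only
        have e1 : 3*(i/3)+1 = i := by omega
        rw [e1]
        rcases cases3 x (i/3) with ⟨hb, hc⟩ | ha
        · rw [hb, hc, sub_zero, sub_zero, max_eq_left (x.2.1 i)]
        · rw [e1] at ha
          rw [ha, max_eq_right (by nlinarith [x.2.1 (3*(i/3)+2), x.2.1 (3*(i/3))])]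
      · have h2 : i % 3 = 2 := by omega
        rw [if_neg h0, if_pos h2, if_pos ⟨h0, hle⟩, if_neg (by omega),
          fidx_eq hjk, Yf_apply]
        simp only
        have e1 : 3*(i/3)+1 = i-1 := by omega
        have e2 : 3*(i/3)+2 = i := by omega
        have e3 : 3*(i/3) = i-2 := by omega
        rw [e1, e2, e3]
        rcases cases3 x (i/3) with ⟨hb, hc⟩ | ha
        · rw [e2] at hb; rw [e3] at hc
          rw [hb, hc, mul_zero, add_zero,
            max_eq_right (by nlinarith [x.2.1 (i-1), x.2.1 (i-2)])]
        · rw [e1] at ha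
          have hneg : -(x.1 (i-1) - x.1 i - x.1 (i-2)) = x.1 i + x.1 (i-2) := by
            rw [ha]; ring
          rw [hneg, max_eq_left (add_nonneg (x.2.1 i) (x.2.1 (i-2)))]
          by_cases hc2 : x.1 (i-2) = 0
          · rw [hc2, mul_zero, add_zero]
          · have hIcc := mem_Icc_of x hc2
            rw [sig_one_eq (by omega) (by omega), one_mul]
    · have hx : x.1 i = 0 := x_big x (by omega)
      rw [if_neg h0]
      by_cases h2 : i % 3 = 2
      · rw [if_pos h2, hx, x_big x (i := i-2) (by omega), mul_zero, add_zero,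
          if_neg (show ¬(i % 3 ≠ 0 ∧ i ≤ 3*k+2) by omega)]
      · rw [if_neg h2, hx, if_neg (show ¬(i % 3 ≠ 0 ∧ i ≤ 3*k+2) by omega)]

noncomputable def Hmap (k : ℕ) :
    ContinuousMap.Homotopy (ContinuousMap.id (DeltaRealization (3*k+2)))
      ((Gmap k).comp (Fmap k)) where
  toFun p := ⟨hf k (p.1 : ℝ) p.2.1, hf_mem p.2 (p.1 : ℝ)⟩
  continuous_toFun := by
    apply Continuous.subtype_mk
    apply continuous_pi
    intro i
    have ht : Continuous fun p : unitInterval × DeltaRealization (3*k+2) => (p.1 : ℝ) :=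
      continuous_subtype_val.comp continuous_fst
    have hsig : Continuous fun p : unitInterval × DeltaRealization (3*k+2) =>
        sig k (i/3) (p.1 : ℝ) := by
      unfold sig
      exact continuous_const.min
        (continuous_const.max ((continuous_const.mul ht).sub continuous_const))
    have hx : ∀ m : ℕ, Continuous fun p : unitInterval × DeltaRealization (3*k+2) =>
        p.2.1 m := fun m =>
      (continuous_apply m).comp (continuous_subtype_val.comp continuous_snd)
    unfold hf
    by_cases h0 : i % 3 = 0
    · simp only [if_pos h0]
      exact (continuous_const.sub hsig).mul (hx i)
    · by_cases h2 : i % 3 = 2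
      · simp only [if_neg h0, if_pos h2]
        exact (hx i).add (hsig.mul (hx (i-2)))
      · simp only [if_neg h0, if_neg h2]
        exact hx i
  map_zero_left x := by
    apply Subtype.ext
    show hf k ((0 : unitInterval) : ℝ) x.1 = x.1
    rw [show ((0 : unitInterval) : ℝ) = 0 from rfl]
    exact hf_zero x
  map_one_left x := by
    apply Subtype.ext
    show hf k ((1 : unitInterval) : ℝ) x.1 = (((Gmap k).comp (Fmap k)) x).1
    rw [show ((1 : unitInterval) : ℝ) = 1 from rfl]
    exact hf_one x

end S5

theorem stmt_5 :
    ∀ k : ℕ, Nonempty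
      (ContinuousMap.HomotopyEquiv (DeltaRealization (3 * k + 2))
        (Metric.sphere (0 : EuclideanSpace ℝ (Fin (k + 1))) 1)) := by
  intro k
  exact ⟨{ toFun := S5.Fmap k
           invFun := S5.Gmap k
           left_inv := ⟨(S5.Hmap k).symm⟩
           right_inv := by
             rw [S5.FG_id k] }⟩
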